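/- The split operation of the LDCF preserves the multiset of stored fingerprints (up to removing the routing bit): the multiset of fingerprints in sub-filter L equals the disjoint union of the multisets in sub-filter_0 and sub-filter_1 after splitting, with each fingerprint's first bit consumed and recoverable from which child it lies in. -/
import Mathlib

/-- The LDCF split preserves the multiset of stored fingerprints: prepending the
routing bit to the tails stored in the two children reconstructs the original
multiset of fingerprints. -/
theorem ldcf_split_preserves_multiset (M : Multiset (List Bool))
    (hne : ∀ l ∈ M, l ≠ []) :
    ((M.filter fun l => l.headI = false).map List.tail).map (List.cons false) +
      ((M.filter fun l => l.headI = true).map List.tail).map (List.cons true) = M := by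
  rw [Multiset.map_map, Multiset.map_map]
  have h1 : Multiset.map (List.cons false ∘ List.tail) (M.filter fun l => l.headI = false)
      = M.filter fun l => l.headI = false := by
    rw [Multiset.map_congr rfl (fun l hl => ?_), Multiset.map_id]
    obtain ⟨hM, hh⟩ := Multiset.mem_filter.mp hl
    cases l with
    | nil => exact absurd rfl (hne _ hM)
    | cons a t => simp_all
  have h2 : Multiset.map (List.cons true ∘ List.tail) (M.filter fun l => l.headI = true)
      = M.filter fun l => l.headI = true := by
    rw [Multiset.map_congr rfl (fun l hl => ?_), Multiset.map_id]
    obtain ⟨hM, hh⟩ := Multiset.mem_filter.mp hl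
    cases l with
    | nil => exact absurd rfl (hne _ hM)
    | cons a t => simp_all
  rw [h1, h2]
  have := Multiset.filter_add_not (fun l : List Bool => l.headI = false) M
  simpa [Bool.not_eq_false] using this
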